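/- arXiv:1612.04321 — 6 statements merged into one kernel-verified Lean document; each statement's English description precedes it below -/
import Mathlib

section
/- Let f be a nonzero complex analytic one-periodic function defined on a neighborhood of the strip T_h = {x + iy : x ∈ ℝ, |y| ≤ h} with h > 0. Then for every 0 < δ < h there exists η > 0 such that for every real μ there is some y ∈ [δ/2, δ] with |f(x + iy) − μ| > η for all x ∈ ℝ. -/
open Complex Set


/-- For a nonzero analytic one-periodic function on a neighborhood of the strip `T_h`,
for every `0 < δ < h` there is `η > 0` such that for every real `μ` some horizontal
line at height `y ∈ [δ/2, δ]` stays at distance more than `η` from `μ`. -/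
theorem stmt0 (h : ℝ) (hh : 0 < h) (f : ℂ → ℂ)
    (hf : AnalyticOnNhd ℂ f {z : ℂ | |z.im| ≤ h})
    (hper : Function.Periodic f 1)
    (hne : ∀ μ : ℝ, ∃ z : ℂ, |z.im| ≤ h ∧ f z ≠ (μ : ℂ)) :
    ∀ δ : ℝ, 0 < δ → δ < h →
      ∃ η > (0 : ℝ), ∀ μ : ℝ, ∃ y ∈ Set.Icc (δ / 2) δ, ∀ x : ℝ,
        η < ‖f (x + y * Complex.I) - (μ : ℂ)‖ := by
  intro δ hδ0 hδh
  set U : Set ℂ := {z : ℂ | |z.im| ≤ h} with hU_def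
  have hcont : ContinuousOn f U := hf.continuousOn
  -- fractional-part reduction
  have hfrac : ∀ (x y : ℝ), f ((x : ℂ) + y * Complex.I)
      = f ((Int.fract x : ℝ) + y * Complex.I) := by
    intro x y
    have := hper.sub_int_mul_eq (x := (x : ℂ) + y * Complex.I) ⌊x⌋
    rw [← this]
    congr 1
    push_cast [Int.fract]
    ring
  -- membership in U
  have hmemU : ∀ y ∈ Icc (δ / 2) δ, ∀ x : ℝ, ((x : ℂ) + y * Complex.I) ∈ U := by
    intro y hy x
    simp only [hU_def, mem_setOf_eq, Complex.add_im, Complex.ofReal_im,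
      Complex.mul_im, Complex.ofReal_re, Complex.I_im, Complex.I_re]
    have : |y| ≤ δ := by
      rw [abs_le]; constructor <;> [linarith [hy.1]; exact hy.2]
    simpa using this.trans hδh.le
  -- continuity of x ↦ f (x + y I) on ℝ for y ∈ Icc
  have hcont' : ∀ y ∈ Icc (δ / 2) δ,
      ContinuousOn (fun x : ℝ => f ((x : ℂ) + y * Complex.I)) (Icc 0 1) := by
    intro y hy
    apply hcont.comp (Continuous.continuousOn (by continuity))
    intro x _; exact hmemU y hy x
  -- U is preconnected
  have hUpre : IsPreconnected U := by
    have : U = Complex.imLm ⁻¹' Icc (-h) h := by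
      ext z; simp [hU_def, abs_le, Complex.imLm]
    rw [this]
    exact ((convex_Icc (-h) h).linear_preimage Complex.imLm).isPreconnected
  -- Key: for each μ there is a good line with a uniform positive lower bound
  have key : ∀ μ : ℝ, ∃ y, y ∈ Icc (δ / 2) δ ∧ ∃ ε, 0 < ε ∧
      ∀ x : ℝ, ε ≤ ‖f ((x : ℂ) + y * Complex.I) - (μ : ℂ)‖ := by
    intro μ
    set S : Set ℂ := (fun p : ℝ × ℝ => (p.1 : ℂ) + p.2 * Complex.I) ''
      (Icc (0:ℝ) 1 ×ˢ Icc (δ / 2) δ) with hS_def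
    have hScomp : IsCompact S :=
      (isCompact_Icc.prod isCompact_Icc).image (by continuity)
    set Z : Set ℂ := {z | z ∈ S ∧ f z = (μ : ℂ)} with hZ_def
    have hZfin : Z.Finite := by
      by_contra hinf
      rw [← Set.not_infinite, not_not] at hinf
      obtain ⟨z₀, hz₀S, hacc⟩ := hinf.exists_accPt_of_subset_isCompact hScomp
        (fun z hz => hz.1)
      have hz₀U : z₀ ∈ U := by
        obtain ⟨⟨x, y⟩, hp, rfl⟩ := hz₀S
        exact hmemU y hp.2 x
      have hfreq : ∃ᶠ z in nhdsWithin z₀ {z₀}ᶜ, (fun w => f w - (μ : ℂ)) z = 0 := by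
        have h1 : ∃ᶠ z in nhds z₀, z ≠ z₀ ∧ z ∈ Z := accPt_iff_frequently.mp hacc
        rw [frequently_nhdsWithin_iff]
        exact h1.mono fun z hz => ⟨sub_eq_zero.mpr hz.2.2, hz.1⟩
      have heq := (hf.sub analyticOnNhd_const).eqOn_zero_of_preconnected_of_frequently_eq_zero
        hUpre hz₀U hfreq
      obtain ⟨z, hz, hzne⟩ := hne μ
      exact hzne (sub_eq_zero.mp (heq hz))
    have hBfin : (Complex.im '' Z).Finite := hZfin.image _
    have hIccInf : (Icc (δ / 2) δ).Infinite := Set.Icc_infinite (by linarith)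
    obtain ⟨y, hy, hyB⟩ : ∃ y ∈ Icc (δ / 2) δ, y ∉ Complex.im '' Z := by
      by_contra hc
      push_neg at hc
      exact hIccInf (hBfin.subset hc)
    have hne' : ∀ x ∈ Icc (0:ℝ) 1, f ((x : ℂ) + y * Complex.I) ≠ (μ : ℂ) := by
      intro x hx hfx
      apply hyB
      refine ⟨(x : ℂ) + y * Complex.I, ⟨⟨(x, y), ⟨hx, hy⟩, rfl⟩, hfx⟩, ?_⟩
      simp
    have hgcont : ContinuousOn
        (fun x : ℝ => ‖f ((x : ℂ) + y * Complex.I) - (μ : ℂ)‖) (Icc 0 1) :=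
      continuous_norm.comp_continuousOn ((hcont' y hy).sub continuousOn_const)
    obtain ⟨x₀, hx₀, hmin⟩ := isCompact_Icc.exists_isMinOn (nonempty_Icc.mpr zero_le_one) hgcont
    refine ⟨y, hy, ‖f ((x₀ : ℂ) + y * Complex.I) - (μ : ℂ)‖, ?_, ?_⟩
    · exact norm_pos_iff.mpr (sub_ne_zero.mpr (hne' x₀ hx₀))
    · intro x
      rw [hfrac x y]
      exact hmin ⟨Int.fract_nonneg x, (Int.fract_lt_one x).le⟩
  -- bound M on the line y = δ
  have hδIcc : δ ∈ Icc (δ / 2) δ := ⟨by linarith, le_rfl⟩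
  obtain ⟨x₀, _, hmax⟩ := isCompact_Icc.exists_isMaxOn (nonempty_Icc.mpr zero_le_one)
    (continuous_norm.comp_continuousOn (hcont' δ hδIcc))
  set M : ℝ := ‖f ((x₀ : ℂ) + δ * Complex.I)‖ with hM_def
  have hM0 : 0 ≤ M := norm_nonneg _
  have hMbound : ∀ x : ℝ, ‖f ((x : ℂ) + δ * Complex.I)‖ ≤ M := by
    intro x
    rw [hfrac x δ]
    exact hmax ⟨Int.fract_nonneg x, (Int.fract_lt_one x).le⟩
  -- choose data
  choose yy hyy ε hε hbound using key
  -- finite subcover of K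
  have hKcomp : IsCompact (Icc (-(M + 1)) (M + 1)) := isCompact_Icc
  obtain ⟨t, htK, htcov⟩ := hKcomp.elim_nhds_subcover (fun μ => Metric.ball μ (ε μ / 2))
    (fun μ _ => Metric.ball_mem_nhds _ (by linarith [hε μ]))
  have ht : t.Nonempty := by
    have h0 : (0 : ℝ) ∈ Icc (-(M + 1)) (M + 1) := ⟨by linarith, by linarith⟩
    obtain ⟨μ₀, hμ₀, _⟩ := Set.mem_iUnion₂.mp (htcov h0)
    exact ⟨μ₀, hμ₀⟩
  set η : ℝ := min (1 / 2) (t.inf' ht fun μ => ε μ / 4) with hη_def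
  have hη0 : 0 < η := by
    apply lt_min (by norm_num)
    rw [Finset.lt_inf'_iff]
    intro i _; linarith [hε i]
  refine ⟨η, hη0, ?_⟩
  intro μ
  by_cases hμ : |μ| ≤ M + 1
  · -- μ in the compact interval
    have hμK : μ ∈ Icc (-(M + 1)) (M + 1) := by
      rw [abs_le] at hμ; exact ⟨by linarith [hμ.1], hμ.2⟩
    obtain ⟨μ₀, hμ₀t, hμball⟩ := Set.mem_iUnion₂.mp (htcov hμK)
    refine ⟨yy μ₀, hyy μ₀, ?_⟩
    intro x
    have h1 := hbound μ₀ x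
    have h2 : ‖(μ : ℂ) - (μ₀ : ℂ)‖ < ε μ₀ / 2 := by
      rw [← Complex.ofReal_sub, Complex.norm_real, Real.norm_eq_abs]
      simpa [Real.dist_eq] using hμball
    have h3 := norm_sub_le_norm_sub_add_norm_sub (f ((x : ℂ) + (yy μ₀) * Complex.I)) (μ : ℂ) (μ₀ : ℂ)
    have hηle : η ≤ ε μ₀ / 4 :=
      (min_le_right _ _).trans (Finset.inf'_le _ hμ₀t)
    linarith [hε μ₀]
  · -- |μ| large: use the line y = δ
    refine ⟨δ, hδIcc, ?_⟩
    intro x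
    push_neg at hμ
    have h1 : ‖(μ : ℂ)‖ - ‖f ((x : ℂ) + δ * Complex.I)‖
        ≤ ‖f ((x : ℂ) + δ * Complex.I) - (μ : ℂ)‖ := by
      rw [norm_sub_rev]
      exact norm_sub_norm_le _ _
    rw [Complex.norm_real, Real.norm_eq_abs] at h1
    have h2 := hMbound x
    have hη12 : η ≤ 1 / 2 := min_le_left _ _
    linarith
end

section
/- Let z₀ ∈ ℂ with |Im z₀| < h, and for real y with |y| ≤ h define the winding number of the curve x ↦ e^{2πi(x+iy)} − e^{2πi z₀}, x ∈ [0,1], around 0. This winding number equals 1 if y < Im z₀ and equals 0 if y > Im z₀. -/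
open Complex

private lemma hasDerivAt_g (y x : ℝ) :
    HasDerivAt (fun t : ℝ => Complex.exp (2 * Real.pi * Complex.I * (t + y * Complex.I)))
      (2 * Real.pi * Complex.I *
        Complex.exp (2 * Real.pi * Complex.I * (x + y * Complex.I))) x := by
  have h1 : HasDerivAt (fun z : ℂ => 2 * Real.pi * Complex.I * (z + y * Complex.I))
      (2 * Real.pi * Complex.I) (x : ℂ) := by
    simpa using ((hasDerivAt_id (x : ℂ)).add_const ((y : ℂ) * Complex.I)).const_mul
      (2 * (Real.pi : ℂ) * Complex.I)
  simpa [mul_comm] using h1.cexp.comp_ofReal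

private lemma abs_g (y x : ℝ) :
    ‖Complex.exp (2 * Real.pi * Complex.I * (x + y * Complex.I))‖ =
      Real.exp (-(2 * Real.pi * y)) := by
  rw [Complex.norm_exp]
  congr 1
  simp [Complex.mul_re, Complex.mul_im]

private lemma abs_w (z₀ : ℂ) :
    ‖Complex.exp (2 * Real.pi * Complex.I * z₀)‖ =
      Real.exp (-(2 * Real.pi * z₀.im)) := by
  rw [Complex.norm_exp]
  congr 1
  simp [Complex.mul_re, Complex.mul_im]

private lemma sub_ne (y : ℝ) (z₀ : ℂ) (hne : y ≠ z₀.im) (x : ℝ) :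
    Complex.exp (2 * Real.pi * Complex.I * (x + y * Complex.I)) -
      Complex.exp (2 * Real.pi * Complex.I * z₀) ≠ 0 := by
  intro h
  rw [sub_eq_zero] at h
  have h2 := congrArg (‖·‖) h
  rw [abs_g, abs_w, Real.exp_eq_exp] at h2
  have : y = z₀.im := by
    have hπ := Real.pi_pos
    nlinarith
  exact hne this

private lemma keyA (y : ℝ) (z₀ : ℂ) (hlt : y < z₀.im) (x : ℝ) :
    HasDerivAt (fun t : ℝ => 2 * Real.pi * Complex.I * (t + y * Complex.I) +
        Complex.log (1 - Complex.exp (2 * Real.pi * Complex.I * z₀) /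
          Complex.exp (2 * Real.pi * Complex.I * (t + y * Complex.I))))
      (2 * Real.pi * Complex.I *
          Complex.exp (2 * Real.pi * Complex.I * (x + y * Complex.I)) /
        (Complex.exp (2 * Real.pi * Complex.I * (x + y * Complex.I)) -
          Complex.exp (2 * Real.pi * Complex.I * z₀))) x := by
  have hE0 : Complex.exp (2 * Real.pi * Complex.I * (x + y * Complex.I)) ≠ 0 :=
    Complex.exp_ne_zero _
  have hsub := sub_ne y z₀ (ne_of_lt hlt) x
  have habs : ‖Complex.exp (2 * Real.pi * Complex.I * z₀) /
      Complex.exp (2 * Real.pi * Complex.I * (x + y * Complex.I))‖ < 1 := by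
    rw [norm_div, abs_g, abs_w]
    rw [div_lt_one (Real.exp_pos _)]
    apply Real.exp_lt_exp.mpr
    have hπ := Real.pi_pos
    nlinarith
  have hre : 0 < (1 - Complex.exp (2 * Real.pi * Complex.I * z₀) /
      Complex.exp (2 * Real.pi * Complex.I * (x + y * Complex.I))).re := by
    have h1 := Complex.re_le_norm (Complex.exp (2 * Real.pi * Complex.I * z₀) /
      Complex.exp (2 * Real.pi * Complex.I * (x + y * Complex.I)))
    simp only [Complex.sub_re, Complex.one_re]
    linarith
  have hu0 : (1 - Complex.exp (2 * Real.pi * Complex.I * z₀) /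
      Complex.exp (2 * Real.pi * Complex.I * (x + y * Complex.I))) ≠ 0 := by
    intro h
    rw [h] at hre
    simp at hre
  -- derivative of linear part
  have h1 : HasDerivAt (fun t : ℝ => 2 * Real.pi * Complex.I * (t + y * Complex.I))
      (2 * Real.pi * Complex.I) x := by
    have := ((hasDerivAt_id (x : ℂ)).add_const ((y : ℂ) * Complex.I)).const_mul
      (2 * (Real.pi : ℂ) * Complex.I)
    simpa using this.comp_ofReal
  -- derivative of 1 - w / E t
  have h2 : HasDerivAt (fun t : ℝ => 1 - Complex.exp (2 * Real.pi * Complex.I * z₀) /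
        Complex.exp (2 * Real.pi * Complex.I * (t + y * Complex.I)))
      (-((0 * Complex.exp (2 * Real.pi * Complex.I * (x + y * Complex.I)) -
          Complex.exp (2 * Real.pi * Complex.I * z₀) *
            (2 * Real.pi * Complex.I *
              Complex.exp (2 * Real.pi * Complex.I * (x + y * Complex.I)))) /
        Complex.exp (2 * Real.pi * Complex.I * (x + y * Complex.I)) ^ 2)) x :=
    ((hasDerivAt_const x _).div (hasDerivAt_g y x) hE0).const_sub 1
  have h3 := (Complex.hasDerivAt_log (Or.inl hre)).comp x h2
  have h4 := h1.add h3
  refine h4.congr_deriv ?_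
  symm
  generalize Complex.exp (2 * Real.pi * Complex.I * (x + y * Complex.I)) = E at hE0 hsub hu0 ⊢
  generalize Complex.exp (2 * Real.pi * Complex.I * z₀) = w at hsub hu0 ⊢
  field_simp
  ring

private lemma keyB (y : ℝ) (z₀ : ℂ) (hgt : z₀.im < y) (x : ℝ) :
    HasDerivAt (fun t : ℝ =>
        Complex.log (1 - Complex.exp (2 * Real.pi * Complex.I * (t + y * Complex.I)) /
          Complex.exp (2 * Real.pi * Complex.I * z₀)))
      (2 * Real.pi * Complex.I *
          Complex.exp (2 * Real.pi * Complex.I * (x + y * Complex.I)) /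
        (Complex.exp (2 * Real.pi * Complex.I * (x + y * Complex.I)) -
          Complex.exp (2 * Real.pi * Complex.I * z₀))) x := by
  have hE0 : Complex.exp (2 * Real.pi * Complex.I * (x + y * Complex.I)) ≠ 0 :=
    Complex.exp_ne_zero _
  have hw0 : Complex.exp (2 * Real.pi * Complex.I * z₀) ≠ 0 := Complex.exp_ne_zero _
  have hsub := sub_ne y z₀ (ne_of_gt hgt) x
  have habs : ‖Complex.exp (2 * Real.pi * Complex.I * (x + y * Complex.I)) /
      Complex.exp (2 * Real.pi * Complex.I * z₀)‖ < 1 := by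
    rw [norm_div, abs_g, abs_w]
    rw [div_lt_one (Real.exp_pos _)]
    apply Real.exp_lt_exp.mpr
    have hπ := Real.pi_pos
    nlinarith
  have hre : 0 < (1 - Complex.exp (2 * Real.pi * Complex.I * (x + y * Complex.I)) /
      Complex.exp (2 * Real.pi * Complex.I * z₀)).re := by
    have h1 := Complex.re_le_norm (Complex.exp (2 * Real.pi * Complex.I * (x + y * Complex.I)) /
      Complex.exp (2 * Real.pi * Complex.I * z₀))
    simp only [Complex.sub_re, Complex.one_re]
    linarith
  have hu0 : (1 - Complex.exp (2 * Real.pi * Complex.I * (x + y * Complex.I)) /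
      Complex.exp (2 * Real.pi * Complex.I * z₀)) ≠ 0 := by
    intro h
    rw [h] at hre
    simp at hre
  have h2 : HasDerivAt (fun t : ℝ => 1 -
        Complex.exp (2 * Real.pi * Complex.I * (t + y * Complex.I)) /
          Complex.exp (2 * Real.pi * Complex.I * z₀))
      (-((2 * Real.pi * Complex.I *
          Complex.exp (2 * Real.pi * Complex.I * (x + y * Complex.I))) /
        Complex.exp (2 * Real.pi * Complex.I * z₀))) x :=
    ((hasDerivAt_g y x).div_const _).const_sub 1
  have h3 := (Complex.hasDerivAt_log (Or.inl hre)).comp x h2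
  refine h3.congr_deriv ?_
  symm
  rw [inv_mul_eq_div, div_eq_div_iff hsub hu0]
  field_simp
  ring

private lemma periodic_g (y : ℝ) :
    Complex.exp (2 * Real.pi * Complex.I * ((1 : ℝ) + y * Complex.I)) =
      Complex.exp (2 * Real.pi * Complex.I * ((0 : ℝ) + y * Complex.I)) := by
  rw [show (2 * (Real.pi : ℂ) * Complex.I * ((1 : ℝ) + y * Complex.I)) =
      2 * Real.pi * Complex.I + 2 * Real.pi * Complex.I * ((0 : ℝ) + y * Complex.I) by
    push_cast; ring]
  rw [Complex.exp_add, Complex.exp_two_pi_mul_I, one_mul]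

private lemma cont_int (y : ℝ) (z₀ : ℂ) (hne : y ≠ z₀.im) :
    IntervalIntegrable (fun x : ℝ => 2 * Real.pi * Complex.I *
        Complex.exp (2 * Real.pi * Complex.I * (x + y * Complex.I)) /
      (Complex.exp (2 * Real.pi * Complex.I * (x + y * Complex.I)) -
        Complex.exp (2 * Real.pi * Complex.I * z₀))) MeasureTheory.volume 0 1 := by
  apply Continuous.intervalIntegrable
  have hc : Continuous (fun x : ℝ =>
      Complex.exp (2 * Real.pi * Complex.I * (x + y * Complex.I))) := by
    apply Complex.continuous_exp.comp
    fun_prop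
  exact (continuous_const.mul hc).div (hc.sub continuous_const) (fun x => sub_ne y z₀ hne x)

/-- Winding number of `x ↦ e^{2πi(x+iy)} − e^{2πi z₀}`, `x ∈ [0,1]`, around 0:
it equals 1 if `y < Im z₀` and 0 if `y > Im z₀`. -/
theorem stmt3 (h : ℝ) (z₀ : ℂ) (hz : |z₀.im| < h) (y : ℝ) (hy : |y| ≤ h)
    (hne : y ≠ z₀.im) :
    (1 / (2 * Real.pi * Complex.I)) *
        ∫ x in (0 : ℝ)..1,
          deriv (fun t : ℝ =>
              Complex.exp (2 * Real.pi * Complex.I * (t + y * Complex.I)) -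
                Complex.exp (2 * Real.pi * Complex.I * z₀)) x /
            (Complex.exp (2 * Real.pi * Complex.I * (x + y * Complex.I)) -
              Complex.exp (2 * Real.pi * Complex.I * z₀)) =
      if y < z₀.im then 1 else 0 := by
  have hπ : (2 * (Real.pi : ℂ) * Complex.I) ≠ 0 := by
    simp [Real.pi_ne_zero, Complex.I_ne_zero]
  rw [intervalIntegral.integral_congr (g := fun x : ℝ => 2 * Real.pi * Complex.I *
        Complex.exp (2 * Real.pi * Complex.I * (x + y * Complex.I)) /
      (Complex.exp (2 * Real.pi * Complex.I * (x + y * Complex.I)) -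
        Complex.exp (2 * Real.pi * Complex.I * z₀)))
    (fun x _ => by rw [((hasDerivAt_g y x).sub_const _).deriv])]
  rcases lt_or_gt_of_ne hne with hlt | hgt
  · rw [if_pos hlt]
    rw [intervalIntegral.integral_eq_sub_of_hasDerivAt
      (f := fun t : ℝ => 2 * Real.pi * Complex.I * (t + y * Complex.I) +
        Complex.log (1 - Complex.exp (2 * Real.pi * Complex.I * z₀) /
          Complex.exp (2 * Real.pi * Complex.I * (t + y * Complex.I))))
      (fun x _ => keyA y z₀ hlt x) (cont_int y z₀ hne)]
    rw [periodic_g y]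
    field_simp
    push_cast
    ring
  · rw [if_neg (not_lt.mpr hgt.le)]
    rw [intervalIntegral.integral_eq_sub_of_hasDerivAt
      (f := fun t : ℝ =>
        Complex.log (1 - Complex.exp (2 * Real.pi * Complex.I * (t + y * Complex.I)) /
          Complex.exp (2 * Real.pi * Complex.I * z₀)))
      (fun x _ => keyB y z₀ hgt x) (cont_int y z₀ hne)]
    rw [periodic_g y]
    simp
end

section
/- Let f : T_h → ℂ be analytic and one-periodic, and suppose that for some −h ≤ y₁ < y₂ ≤ h one has inf{|f(z)| : y₁ ≤ Im z ≤ y₂} > 0. Then the function I(y) = ∫₀¹ log|f(x + iy)| dx is affine (in fact linear with slope −2π · ind) on [y₁, y₂]; more precisely, for all y in [y₁, y₂], the right derivative (1/2π) D₊ I(y) equals minus the winding number of x ↦ f(x + iy₁) around 0. -/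
open Complex

/-- A closed rectangle in `ℂ` is compact. -/
lemma auxRectCompact (p q r s : ℝ) :
    IsCompact {z : ℂ | z.re ∈ Set.Icc p q ∧ z.im ∈ Set.Icc r s} := by
  have hc : Continuous (fun pr : ℝ × ℝ => (pr.1 : ℂ) + pr.2 * Complex.I) := by fun_prop
  have himg : (fun pr : ℝ × ℝ => (pr.1 : ℂ) + pr.2 * Complex.I) ''
      (Set.Icc p q ×ˢ Set.Icc r s) = {z : ℂ | z.re ∈ Set.Icc p q ∧ z.im ∈ Set.Icc r s} := by
    ext z
    constructor
    · rintro ⟨⟨a, b⟩, ⟨ha, hb⟩, rfl⟩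
      constructor <;> simp [ha, hb]
    · rintro ⟨h1, h2⟩
      exact ⟨⟨z.re, z.im⟩, ⟨h1, h2⟩, z.re_add_im⟩
  rw [← himg]
  exact ((isCompact_Icc.prod isCompact_Icc).image hc)

/-- Derivative along a vertical line. -/
lemma auxVertDeriv {f : ℂ → ℂ} (x t : ℝ) (hd : DifferentiableAt ℂ f (↑x + ↑t * Complex.I)) :
    HasDerivAt (fun s : ℝ => f (↑x + ↑s * Complex.I))
      (deriv f (↑x + ↑t * Complex.I) * Complex.I) t := by
  have hpath : HasDerivAt (fun s : ℝ => (↑x + ↑s * Complex.I : ℂ)) Complex.I t := by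
    have h1 : HasDerivAt (fun s : ℝ => (s : ℂ)) 1 t := Complex.ofRealCLM.hasDerivAt
    simpa using ((h1.mul_const Complex.I).const_add (x : ℂ))
  exact (hd.hasDerivAt.comp t hpath).congr_deriv (by ring)

/-- Derivative along a horizontal line. -/
lemma auxHorizDeriv {f : ℂ → ℂ} (x t : ℝ) (hd : DifferentiableAt ℂ f (↑x + ↑t * Complex.I)) :
    HasDerivAt (fun s : ℝ => f (↑s + ↑t * Complex.I))
      (deriv f (↑x + ↑t * Complex.I)) x := by
  have hpath : HasDerivAt (fun s : ℝ => (↑s + ↑t * Complex.I : ℂ)) 1 x := by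
    have h1 : HasDerivAt (fun s : ℝ => (s : ℂ)) 1 x := Complex.ofRealCLM.hasDerivAt
    simpa using (h1.add_const ((t : ℂ) * Complex.I))
  exact (hd.hasDerivAt.comp x hpath).congr_deriv (by ring)

/-- Derivative of `log |f|` along a vertical line. -/
lemma auxLogAbsDeriv {f : ℂ → ℂ} (x t : ℝ)
    (hd : DifferentiableAt ℂ f (↑x + ↑t * Complex.I))
    (hne : f (↑x + ↑t * Complex.I) ≠ 0) :
    HasDerivAt (fun s : ℝ => Real.log ‖f (↑x + ↑s * Complex.I)‖)
      ((Complex.I * (deriv f (↑x + ↑t * Complex.I) / f (↑x + ↑t * Complex.I))).re) t := by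
  set z : ℂ := ↑x + ↑t * Complex.I with hz
  have hpath : HasDerivAt (fun s : ℝ => f (↑x + ↑s * Complex.I)) (deriv f z * Complex.I) t :=
    auxVertDeriv x t hd
  set d : ℂ := deriv f z * Complex.I with hdI
  have ha : HasDerivAt (fun s : ℝ => (f (↑x + ↑s * Complex.I)).re) d.re t :=
    Complex.reCLM.hasFDerivAt.comp_hasDerivAt t hpath
  have hb : HasDerivAt (fun s : ℝ => (f (↑x + ↑s * Complex.I)).im) d.im t :=
    Complex.imCLM.hasFDerivAt.comp_hasDerivAt t hpath
  have hu : HasDerivAt (fun s : ℝ => Complex.normSq (f (↑x + ↑s * Complex.I)))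
      (d.re * (f z).re + (f z).re * d.re + (d.im * (f z).im + (f z).im * d.im)) t := by
    have := (ha.mul ha).add (hb.mul hb)
    simp only [Complex.normSq_apply]
    exact this
  have hu0 : Complex.normSq (f z) ≠ 0 := (Complex.normSq_pos.2 hne).ne'
  have hlog : HasDerivAt (fun s : ℝ => Real.log (Complex.normSq (f (↑x + ↑s * Complex.I))) / 2)
      ((d.re * (f z).re + (f z).re * d.re + (d.im * (f z).im + (f z).im * d.im))
        / Complex.normSq (f z) / 2) t :=
    (hu.log hu0).div_const 2
  have hfun : (fun s : ℝ => Real.log ‖f (↑x + ↑s * Complex.I)‖)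
      = fun s : ℝ => Real.log (Complex.normSq (f (↑x + ↑s * Complex.I))) / 2 := by
    funext s
    rw [Complex.norm_def, Real.log_sqrt (Complex.normSq_nonneg _)]
  rw [hfun]
  convert hlog using 1
  have : Complex.I * (deriv f z / f z) = d / f z := by rw [hdI]; ring
  rw [this, Complex.div_re]
  field_simp
  ring

lemma auxStrip (h y₁ y₂ : ℝ) (f : ℂ → ℂ)
    (hf : AnalyticOnNhd ℂ f {z : ℂ | |z.im| ≤ h})
    (hper : Function.Periodic f 1)
    (hy₁ : -h ≤ y₁) (hy₁₂ : y₁ ≤ y₂) (hy₂ : y₂ ≤ h)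
    (c : ℝ) (hc : 0 < c)
    (hlow : ∀ z : ℂ, y₁ ≤ z.im → z.im ≤ y₂ → c ≤ ‖f z‖) :
    ∃ a b : ℝ, a < y₁ ∧ y₂ < b ∧
      ∀ z : ℂ, a < z.im → z.im < b → AnalyticAt ℂ f z ∧ f z ≠ 0 := by
  set W : Set ℂ := {z : ℂ | AnalyticAt ℂ f z ∧ f z ≠ 0} with hW
  set K : Set ℂ := {z : ℂ | z.re ∈ Set.Icc 0 1 ∧ z.im ∈ Set.Icc y₁ y₂} with hK
  have hS : ∀ z : ℂ, y₁ ≤ z.im → z.im ≤ y₂ → AnalyticAt ℂ f z ∧ f z ≠ 0 := by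
    intro z h1 h2
    have hana : AnalyticAt ℂ f z := hf z (by
      simp only [Set.mem_setOf_eq, abs_le]
      exact ⟨le_trans hy₁ h1, le_trans h2 hy₂⟩)
    refine ⟨hana, ?_⟩
    have := hlow z h1 h2
    intro h0
    rw [h0] at this
    simp at this
    linarith
  have hKW : K ⊆ interior W := by
    intro p hp
    rw [mem_interior_iff_mem_nhds]
    have hPa := (hS p hp.2.1 hp.2.2).1
    have hPn := (hS p hp.2.1 hp.2.2).2
    have h1 : ∀ᶠ z in nhds p, AnalyticAt ℂ f z := hPa.eventually_analyticAt
    have h2 : ∀ᶠ z in nhds p, f z ≠ 0 := hPa.continuousAt.eventually_ne hPn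
    filter_upwards [h1, h2] with z hz1 hz2
    exact ⟨hz1, hz2⟩
  obtain ⟨δ, hδ, hthick⟩ := (auxRectCompact 0 1 y₁ y₂).exists_thickening_subset_open
    isOpen_interior hKW
  refine ⟨y₁ - δ, y₂ + δ, by linarith, by linarith, ?_⟩
  intro z hza hzb
  -- translate z by an integer to put its real part in [0,1)
  set n : ℤ := ⌊z.re⌋ with hn
  set z₀ : ℂ := z - (n : ℂ) with hz₀
  have hre0 : z₀.re ∈ Set.Icc (0:ℝ) 1 := by
    constructor
    · simp only [hz₀, Complex.sub_re, Complex.intCast_re]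
      have := Int.floor_le z.re
      linarith
    · simp only [hz₀, Complex.sub_re, Complex.intCast_re]
      have := Int.lt_floor_add_one z.re
      linarith
  have him0 : z₀.im = z.im := by simp [hz₀]
  -- clamp imaginary part
  set cim : ℝ := min (max z.im y₁) y₂ with hcim
  have hcimK : cim ∈ Set.Icc y₁ y₂ := by
    constructor
    · exact le_min (le_max_right _ _) hy₁₂
    · exact min_le_right _ _
  have hdist : |z.im - cim| < δ := by
    rcases le_or_gt z.im y₁ with h1 | h1
    · have : cim = y₁ := by
        rw [hcim, max_eq_right h1, min_eq_left hy₁₂]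
      rw [this, abs_sub_lt_iff]; constructor <;> linarith
    · rcases le_or_gt z.im y₂ with h2 | h2
      · have : cim = z.im := by
          rw [hcim, max_eq_left h1.le, min_eq_left h2]
        rw [this, abs_sub_lt_iff]; constructor <;> linarith
      · have : cim = y₂ := by
          rw [hcim, max_eq_left h1.le, min_eq_right h2.le]
        rw [this, abs_sub_lt_iff]; constructor <;> linarith
  have hz₀W : z₀ ∈ W := by
    apply interior_subset
    apply hthick
    rw [Metric.mem_thickening_iff]
    refine ⟨⟨z₀.re, cim⟩, ⟨by simpa using hre0, by simpa using hcimK⟩, ?_⟩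
    rw [Complex.dist_eq]
    have : z₀ - ⟨z₀.re, cim⟩ = ⟨0, z.im - cim⟩ := by
      apply Complex.ext <;> simp [him0]
    rw [this]
    have habs : ‖(⟨0, z.im - cim⟩ : ℂ)‖ = |z.im - cim| := by
      rw [Complex.norm_def, Complex.normSq_mk]
      rw [show (0:ℝ)*0 + (z.im - cim)*(z.im - cim) = (z.im - cim)^2 by ring]
      exact Real.sqrt_sq_eq_abs _
    rw [habs]
    exact hdist
  -- transfer back to z by periodicity
  have hfz : f z = f z₀ := by
    have := (hper.int_mul n) z₀
    simp only [mul_one] at this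
    rw [hz₀] at this ⊢
    simpa using this
  obtain ⟨hana₀, hne₀⟩ := hz₀W
  constructor
  · have hcomp : AnalyticAt ℂ (fun w : ℂ => f (w - (n : ℂ))) z := by
      apply AnalyticAt.comp (by simpa [hz₀] using hana₀)
      exact (analyticAt_id).sub analyticAt_const
    have : (fun w : ℂ => f (w - (n : ℂ))) = f := by
      funext w
      have := (hper.int_mul n) (w - (n : ℂ))
      simp only [mul_one] at this
      simpa using this.symm
    rwa [this] at hcomp
  · rw [hfz]; exact hne₀

set_option maxHeartbeats 2000000 in
/-- If `f` is analytic and one-periodic on the strip and bounded away from `0` on the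
substrip `y₁ ≤ Im z ≤ y₂`, then `I(y) = ∫₀¹ log|f(x+iy)| dx` is affine on `[y₁, y₂]`,
and its right derivative divided by `2π` equals minus the winding number of
`x ↦ f(x + i y₁)` around `0`. -/
theorem stmt4 (h y₁ y₂ : ℝ) (f : ℂ → ℂ)
    (hf : AnalyticOnNhd ℂ f {z : ℂ | |z.im| ≤ h})
    (hper : Function.Periodic f 1)
    (hy₁ : -h ≤ y₁) (hy₁₂ : y₁ < y₂) (hy₂ : y₂ ≤ h)
    (c : ℝ) (hc : 0 < c)
    (hlow : ∀ z : ℂ, y₁ ≤ z.im → z.im ≤ y₂ → c ≤ ‖f z‖) :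
    (∃ A B : ℝ, ∀ y ∈ Set.Icc y₁ y₂,
        (∫ x in (0 : ℝ)..1, Real.log ‖f (x + y * Complex.I)‖) = A * y + B) ∧
    (∀ y ∈ Set.Ico y₁ y₂,
        (1 / (2 * Real.pi)) *
            derivWithin
              (fun t : ℝ => ∫ x in (0 : ℝ)..1,
                Real.log ‖f (x + t * Complex.I)‖) (Set.Ici y) y =
          -(((1 / (2 * Real.pi * Complex.I)) *
              ∫ x in (0 : ℝ)..1,
                deriv (fun t : ℝ => f (t + y₁ * Complex.I)) x /
                  f (x + y₁ * Complex.I)).re)) := by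
  obtain ⟨a, b, hay, hyb, hU⟩ := auxStrip h y₁ y₂ f hf hper hy₁ hy₁₂.le hy₂ c hc hlow
  set g : ℂ → ℂ := fun z => deriv f z / f z with hg
  have himv : ∀ x t : ℝ, ((x : ℂ) + (t : ℂ) * Complex.I).im = t := by intro x t; simp
  have hgd : ∀ z : ℂ, a < z.im → z.im < b → DifferentiableAt ℂ g z := by
    intro z h1 h2
    obtain ⟨hana, hne⟩ := hU z h1 h2
    have hderiv : AnalyticAt ℂ (deriv f) z :=
      (AnalyticOnNhd.deriv (fun x hx => hx : AnalyticOnNhd ℂ f {w : ℂ | AnalyticAt ℂ f w})) z hana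
    exact ((hderiv.div hana hne)).differentiableAt
  have hgc : ∀ z : ℂ, a < z.im → z.im < b → ContinuousAt g z :=
    fun z h1 h2 => (hgd z h1 h2).continuousAt
  have hgper : ∀ z : ℂ, a < z.im → z.im < b → g (z + 1) = g z := by
    intro z h1 h2
    have him : (z + 1).im = z.im := by simp
    have hz1 := hU (z + 1) (by rwa [him]) (by rwa [him])
    have hd : deriv f (z + 1) = deriv f z := by
      have h1' : HasDerivAt f (deriv f (z + 1)) (z + 1) := hz1.1.differentiableAt.hasDerivAt
      have hpath : HasDerivAt (fun w : ℂ => w + 1) 1 z := by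
        simpa using (hasDerivAt_id z).add_const (1 : ℂ)
      have hcomp := h1'.comp z hpath
      rw [show (f ∘ fun w : ℂ => w + 1) = f from funext fun w => hper w] at hcomp
      have := hcomp.deriv
      simpa using this.symm
    simp only [hg]
    rw [hd, hper z]
  have hIcc_ab : ∀ t : ℝ, y₁ ≤ t → t ≤ y₂ → a < t ∧ t < b :=
    fun t h1 h2 => ⟨lt_of_lt_of_le hay h1, lt_of_le_of_lt h2 hyb⟩
  set w : ℂ := ∫ x in (0:ℝ)..1, g ((x : ℂ) + (y₁ : ℂ) * Complex.I) with hw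
  -- the horizontal integrals of g are constant in height
  have hconst : ∀ t : ℝ, y₁ ≤ t → t ≤ y₂ →
      (∫ x in (0:ℝ)..1, g ((x : ℂ) + (t : ℂ) * Complex.I)) = w := by
    intro t ht1 ht2
    have hdiff : DifferentiableOn ℂ g
        (Set.uIcc (0:ℝ) 1 ×ℂ Set.uIcc y₁ t) := by
      intro z hz
      rw [Complex.mem_reProdIm] at hz
      have him : z.im ∈ Set.Icc y₁ t := by
        rw [Set.uIcc_of_le ht1] at hz
        exact hz.2
      exact (hgd z (lt_of_lt_of_le hay him.1) (lt_of_le_of_lt (le_trans him.2 ht2) hyb)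
        ).differentiableWithinAt
    have hrect : (∫ x in (0:ℝ)..1, g ((x:ℂ) + (y₁:ℂ) * Complex.I)) -
        (∫ x in (0:ℝ)..1, g ((x:ℂ) + (t:ℂ) * Complex.I)) +
        Complex.I • (∫ s in y₁..t, g (((1:ℝ):ℂ) + (s:ℂ) * Complex.I)) -
        Complex.I • (∫ s in y₁..t, g (((0:ℝ):ℂ) + (s:ℂ) * Complex.I)) = 0 :=
      Complex.integral_boundary_rect_eq_zero_of_differentiableOn g ⟨0, y₁⟩ ⟨1, t⟩ hdiff
    have hvert : (∫ s in y₁..t, g (((1:ℝ):ℂ) + (s:ℂ) * Complex.I)) =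
        ∫ s in y₁..t, g (((0:ℝ):ℂ) + (s:ℂ) * Complex.I) := by
      apply intervalIntegral.integral_congr
      intro s hs
      rw [Set.uIcc_of_le ht1] at hs
      have h1 : a < (((0:ℝ):ℂ) + (s:ℂ) * Complex.I).im := by
        rw [himv]; exact lt_of_lt_of_le hay hs.1
      have h2 : (((0:ℝ):ℂ) + (s:ℂ) * Complex.I).im < b := by
        rw [himv]; exact lt_of_le_of_lt (le_trans hs.2 ht2) hyb
      have := hgper _ h1 h2
      rw [show (((0:ℝ):ℂ) + (s:ℂ) * Complex.I) + 1 = ((1:ℝ):ℂ) + (s:ℂ) * Complex.I by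
        push_cast; ring] at this
      exact this
    rw [hvert] at hrect
    rw [hw]
    linear_combination -hrect
  -- the key derivative computation
  have hKey : ∀ t₀ : ℝ, y₁ ≤ t₀ → t₀ ≤ y₂ →
      HasDerivAt (fun t : ℝ => ∫ x in (0:ℝ)..1,
        Real.log ‖f ((x:ℂ) + (t:ℂ) * Complex.I)‖)
        ((Complex.I * w).re) t₀ := by
    intro t₀ ht₀1 ht₀2
    obtain ⟨hta, htb⟩ := hIcc_ab t₀ ht₀1 ht₀2
    have hminpos : 0 < min (t₀ - a) (b - t₀) := lt_min (by linarith) (by linarith)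
    set ε : ℝ := min (t₀ - a) (b - t₀) / 2 with hε
    have hεpos : 0 < ε := by positivity
    have hεa : ε < t₀ - a := lt_of_lt_of_le (half_lt_self hminpos) (min_le_left _ _)
    have hεb : ε < b - t₀ := lt_of_lt_of_le (half_lt_self hminpos) (min_le_right _ _)
    have hball : ∀ t : ℝ, t ∈ Metric.ball t₀ ε → a < t ∧ t < b := by
      intro t ht
      rw [Metric.mem_ball, Real.dist_eq, abs_sub_lt_iff] at ht
      exact ⟨by linarith [ht.2], by linarith [ht.1]⟩
    have hfcont : ∀ t : ℝ, a < t → t < b → Continuous (fun x : ℝ => f ((x:ℂ) + (t:ℂ) * Complex.I)) := by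
      intro t h1 h2
      have hpath : Continuous (fun x : ℝ => ((x:ℂ) + (t:ℂ) * Complex.I)) := Complex.continuous_ofReal.add continuous_const
      refine continuous_iff_continuousAt.2 fun x => ?_
      exact ((hU _ (by rw [himv]; exact h1) (by rw [himv]; exact h2)).1.continuousAt).comp
        hpath.continuousAt
    have hgcont : ∀ t : ℝ, a < t → t < b → Continuous (fun x : ℝ => g ((x:ℂ) + (t:ℂ) * Complex.I)) := by
      intro t h1 h2
      have hpath : Continuous (fun x : ℝ => ((x:ℂ) + (t:ℂ) * Complex.I)) := Complex.continuous_ofReal.add continuous_const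
      refine continuous_iff_continuousAt.2 fun x => ?_
      exact (hgc _ (by rw [himv]; exact h1) (by rw [himv]; exact h2)).comp hpath.continuousAt
    have hFcont : ∀ t : ℝ, a < t → t < b →
        Continuous (fun x : ℝ => Real.log ‖f ((x:ℂ) + (t:ℂ) * Complex.I)‖) := by
      intro t h1 h2
      refine continuous_iff_continuousAt.2 fun x => ?_
      have h3 : Continuous fun x : ℝ => ‖f ((x:ℂ) + (t:ℂ) * Complex.I)‖ :=
        continuous_norm.comp (hfcont t h1 h2)
      exact (h3.log fun x => by
        simpa using (hU _ (by rw [himv]; exact h1) (by rw [himv]; exact h2)).2).continuousAt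
    -- bound on the compact rectangle
    have hRsub : ∀ z : ℂ, z.im ∈ Set.Icc (t₀ - ε) (t₀ + ε) → a < z.im ∧ z.im < b := by
      intro z hz
      exact ⟨by linarith [hz.1], by linarith [hz.2]⟩
    have hRcont : ContinuousOn g {z : ℂ | z.re ∈ Set.Icc 0 1 ∧ z.im ∈ Set.Icc (t₀-ε) (t₀+ε)} := by
      intro z hz
      exact (hgc z (hRsub z hz.2).1 (hRsub z hz.2).2).continuousWithinAt
    obtain ⟨M, hM⟩ := (auxRectCompact 0 1 (t₀-ε) (t₀+ε)).exists_bound_of_continuousOn hRcont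
    have hmeas : ∀ᶠ (t : ℝ) in nhds t₀, MeasureTheory.AEStronglyMeasurable
        (fun x : ℝ => Real.log ‖f ((x:ℂ) + (t:ℂ) * Complex.I)‖)
        (MeasureTheory.volume.restrict (Set.uIoc (0:ℝ) 1)) := by
      have hnh : Set.Ioo a b ∈ nhds t₀ := isOpen_Ioo.mem_nhds ⟨hta, htb⟩
      filter_upwards [hnh] with t ht
      exact ((hFcont t ht.1 ht.2).aestronglyMeasurable).restrict
    have hFint : IntervalIntegrable
        (fun x : ℝ => Real.log ‖f ((x:ℂ) + (t₀:ℂ) * Complex.I)‖)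
        MeasureTheory.volume 0 1 := (hFcont t₀ hta htb).intervalIntegrable 0 1
    have hF'meas : MeasureTheory.AEStronglyMeasurable
        (fun x : ℝ => (Complex.I * g ((x:ℂ) + (t₀:ℂ) * Complex.I)).re)
        (MeasureTheory.volume.restrict (Set.uIoc (0:ℝ) 1)) := by
      exact (Continuous.aestronglyMeasurable
        (Complex.continuous_re.comp (continuous_const.mul (hgcont t₀ hta htb)))).restrict
    have hbound : ∀ᵐ x ∂MeasureTheory.volume, x ∈ Set.uIoc (0:ℝ) 1 →
        ∀ t ∈ Metric.ball t₀ ε,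
          ‖(Complex.I * g ((x:ℂ) + (t:ℂ) * Complex.I)).re‖ ≤ M := by
      apply Filter.Eventually.of_forall
      intro x hx t ht
      obtain ⟨hta', htb'⟩ := hball t ht
      have hxI : x ∈ Set.Icc (0:ℝ) 1 := by
        rw [Set.uIoc_of_le (by norm_num : (0:ℝ) ≤ 1)] at hx
        exact ⟨hx.1.le, hx.2⟩
      have htI : t ∈ Set.Icc (t₀ - ε) (t₀ + ε) := by
        rw [Metric.mem_ball, Real.dist_eq, abs_sub_lt_iff] at ht
        exact ⟨by linarith [ht.2], by linarith [ht.1]⟩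
      have hmem : ((x:ℂ) + (t:ℂ) * Complex.I) ∈
          {z : ℂ | z.re ∈ Set.Icc 0 1 ∧ z.im ∈ Set.Icc (t₀-ε) (t₀+ε)} := by
        refine ⟨by simpa using hxI, ?_⟩
        rw [himv]; exact htI
      have hMz := hM _ hmem
      calc ‖(Complex.I * g ((x:ℂ) + (t:ℂ) * Complex.I)).re‖
          ≤ ‖Complex.I * g ((x:ℂ) + (t:ℂ) * Complex.I)‖ := by
            rw [Real.norm_eq_abs]; exact Complex.abs_re_le_norm _
        _ = ‖g ((x:ℂ) + (t:ℂ) * Complex.I)‖ := by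
            rw [norm_mul, Complex.norm_I, one_mul]
        _ ≤ M := hMz
    have hdiff2 : ∀ᵐ x ∂MeasureTheory.volume, x ∈ Set.uIoc (0:ℝ) 1 →
        ∀ t ∈ Metric.ball t₀ ε,
          HasDerivAt (fun t : ℝ => Real.log ‖f ((x:ℂ) + (t:ℂ) * Complex.I)‖)
            ((Complex.I * g ((x:ℂ) + (t:ℂ) * Complex.I)).re) t := by
      apply Filter.Eventually.of_forall
      intro x _ t ht
      obtain ⟨hta', htb'⟩ := hball t ht
      obtain ⟨hana, hne⟩ := hU ((x:ℂ) + (t:ℂ) * Complex.I) (by rw [himv]; exact hta')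
        (by rw [himv]; exact htb')
      exact auxLogAbsDeriv x t hana.differentiableAt hne
    have hdom := intervalIntegral.hasDerivAt_integral_of_dominated_loc_of_deriv_le
      (Metric.ball_mem_nhds t₀ hεpos) hmeas hFint hF'meas hbound intervalIntegrable_const hdiff2
    have hval : (∫ x in (0:ℝ)..1, (Complex.I * g ((x:ℂ) + (t₀:ℂ) * Complex.I)).re)
        = (Complex.I * w).re := by
      have hint : IntervalIntegrable (fun x : ℝ => Complex.I * g ((x:ℂ) + (t₀:ℂ) * Complex.I))
          MeasureTheory.volume 0 1 :=
        (continuous_const.mul (hgcont t₀ hta htb)).intervalIntegrable 0 1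
      have h1 := Complex.reCLM.intervalIntegral_comp_comm hint
      simp only [Complex.reCLM_apply] at h1
      rw [h1, intervalIntegral.integral_const_mul, hconst t₀ ht₀1 ht₀2]
    rw [← hval]
    exact hdom.2
  set A : ℝ := (Complex.I * w).re with hA
  have hy₁b : a < y₁ ∧ y₁ < b := hIcc_ab y₁ le_rfl hy₁₂.le
  constructor
  · refine ⟨A, (∫ x in (0:ℝ)..1,
      Real.log ‖f ((x:ℂ) + (y₁:ℂ) * Complex.I)‖) - A * y₁, ?_⟩
    intro y hy
    have heq := intervalIntegral.integral_eq_sub_of_hasDerivAt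
      (f := fun t : ℝ => ∫ x in (0:ℝ)..1, Real.log ‖f ((x:ℂ) + (t:ℂ) * Complex.I)‖)
      (f' := fun _ => A) (a := y₁) (b := y)
      (fun t ht => by
        rw [Set.uIcc_of_le hy.1] at ht
        exact hKey t ht.1 (le_trans ht.2 hy.2))
      intervalIntegrable_const
    rw [intervalIntegral.integral_const] at heq
    have : (y - y₁) • A = (y - y₁) * A := rfl
    rw [this] at heq
    linarith [heq]
  · intro y hy
    have hdW := ((hKey y hy.1 hy.2.le).hasDerivWithinAt).derivWithin
      (uniqueDiffOn_Ici y y Set.self_mem_Ici)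
    rw [hdW]
    have hw' : (∫ x in (0:ℝ)..1, deriv (fun t : ℝ => f ((t:ℂ) + (y₁:ℂ) * Complex.I)) x /
        f ((x:ℂ) + (y₁:ℂ) * Complex.I)) = w := by
      apply intervalIntegral.integral_congr
      intro x _
      have hana := (hU ((x:ℂ) + (y₁:ℂ) * Complex.I) (by rw [himv]; exact hy₁b.1)
        (by rw [himv]; exact hy₁b.2)).1
      show deriv (fun t : ℝ => f ((t:ℂ) + (y₁:ℂ) * Complex.I)) x /
          f ((x:ℂ) + (y₁:ℂ) * Complex.I) = g ((x:ℂ) + (y₁:ℂ) * Complex.I)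
      rw [(auxHorizDeriv x y₁ hana.differentiableAt).deriv]
    rw [hw']
    have hpine : ((2:ℂ) * (Real.pi:ℂ) * Complex.I) ≠ 0 := by
      simp [Real.pi_ne_zero, Complex.I_ne_zero]
    have h2 : (1 / (2 * (Real.pi:ℂ) * Complex.I)) * w
        = (-(Complex.I * w)) / (((2 * Real.pi : ℝ)):ℂ) := by
      have hpi2 : (((2 * Real.pi : ℝ)):ℂ) ≠ 0 := by
        simpa using Real.pi_ne_zero
      rw [one_div_mul_eq_div, div_eq_div_iff hpine hpi2]
      push_cast
      rw [show (-(Complex.I*w)) * (2*(Real.pi:ℂ)*Complex.I)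
          = w * (2*(Real.pi:ℂ)) * (-(Complex.I*Complex.I)) by ring, Complex.I_mul_I]
      ring
    rw [h2, Complex.div_ofReal_re, Complex.neg_re, ← hA]
    ring
end

section
/- Let g : ℂ → ℂ be analytic on the closed disk of radius h > 0 about x₀ with g(x₀) = 0, sup norm bound ‖g‖ ≤ M on that disk, and write g(z) = (z − x₀)^n (a + H(z)) where a ≠ 0 and H(x₀) = 0 with H analytic. If 0 < r < h·(|a|h^n)/(M + |a|h^n), then g(z) ≠ 0 for all z with 0 < |z − x₀| ≤ r. -/
open Metric Set

/-- If `g` is analytic on the closed disk of radius `h` about `x₀`, vanishes at `x₀`,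
is bounded by `M`, and factors as `g(z) = (z − x₀)^n (a + H(z))` with `a ≠ 0`,
`H` analytic, `H(x₀) = 0`, then `g` has no zero in the punctured disk of radius `r`
whenever `0 < r < h·(|a|hⁿ)/(M + |a|hⁿ)`. -/
theorem stmt11 (x₀ : ℂ) (h M r : ℝ) (hh : 0 < h) (n : ℕ) (a : ℂ) (g H : ℂ → ℂ)
    (hg : AnalyticOnNhd ℂ g (Metric.closedBall x₀ h))
    (hH : AnalyticOnNhd ℂ H (Metric.closedBall x₀ h))
    (hbound : ∀ z ∈ Metric.closedBall x₀ h, ‖g z‖ ≤ M)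
    (hg0 : g x₀ = 0) (ha : a ≠ 0) (hH0 : H x₀ = 0)
    (hfac : ∀ z ∈ Metric.closedBall x₀ h, g z = (z - x₀) ^ n * (a + H z))
    (hr : 0 < r)
    (hr' : r < h * (‖a‖ * h ^ n) / (M + ‖a‖ * h ^ n)) :
    ∀ z : ℂ, z ≠ x₀ → ‖z - x₀‖ ≤ r → g z ≠ 0 := by
  intro z hz hzr
  have hM0 : 0 ≤ M := by
    have := hbound x₀ (by simp [hh.le])
    simpa [hg0] using this
  have hApos : (0:ℝ) < ‖a‖ * h ^ n :=
    mul_pos (norm_pos_iff.mpr ha) (pow_pos hh n)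
  have hfrac : h * (‖a‖ * h ^ n) / (M + ‖a‖ * h ^ n) ≤ h := by
    rw [div_le_iff₀ (by linarith)]
    nlinarith
  have hrh : r < h := lt_of_lt_of_le hr' hfrac
  have hzball : z ∈ closedBall x₀ h := by
    simp only [mem_closedBall, Complex.dist_eq]
    exact hzr.trans hrh.le
  set C : ℝ := M / h ^ n with hC
  -- step 1: |a + H w| ≤ C on closed ball
  have step1 : ∀ w ∈ closedBall x₀ h, ‖a + H w‖ ≤ C := by
    intro w hw
    have hcl : closure (ball x₀ h) = closedBall x₀ h := closure_ball x₀ hh.ne'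
    refine Complex.norm_le_of_forall_mem_frontier_norm_le (f := fun w => a + H w) (isBounded_ball)
      ?_ ?_ (by rw [hcl]; exact hw)
    · constructor
      · exact fun w hw => DifferentiableAt.differentiableWithinAt (DifferentiableAt.add (differentiableAt_const a) (hH w (ball_subset_closedBall hw)).differentiableAt)
      · rw [hcl]
        exact fun w hw => ContinuousAt.continuousWithinAt (ContinuousAt.add continuousAt_const (hH w hw).continuousAt)
    · intro w hw
      rw [frontier_ball x₀ hh.ne'] at hw
      have hwd : ‖w - x₀‖ = h := by
        rw [mem_sphere, Complex.dist_eq] at hw; exact hw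
      have hwcb : w ∈ closedBall x₀ h := sphere_subset_closedBall hw
      have := hbound w hwcb
      rw [hfac w hwcb] at this
      rw [norm_mul, norm_pow, hwd] at this
      rw [hC, le_div_iff₀ (by positivity)]
      linarith [this]
  -- step 2: |H w| ≤ C + |a| on closed ball
  have step2 : ∀ w ∈ closedBall x₀ h, ‖H w‖ ≤ C + ‖a‖ := by
    intro w hw
    have := step1 w hw
    calc ‖H w‖ = ‖a + H w - a‖ := by ring_nf
      _ ≤ ‖a + H w‖ + ‖a‖ := by
          simpa using norm_sub_le (a + H w) a
      _ ≤ C + ‖a‖ := by linarith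
  -- step 3: Schwarz
  have step3 : ∀ ε > 0, ‖H z‖ ≤ (C + ‖a‖ + ε) / h * r := by
    intro ε hε
    have hmaps : MapsTo H (ball x₀ h) (ball (H x₀) (C + ‖a‖ + ε)) := by
      intro w hw
      rw [mem_ball, hH0, dist_zero_right]
      exact lt_of_le_of_lt (step2 w (ball_subset_closedBall hw)) (by linarith)
    have hdiff : DifferentiableOn ℂ H (ball x₀ h) :=
      fun w hw => (hH w (ball_subset_closedBall hw)).differentiableAt.differentiableWithinAt
    have := Complex.dist_le_div_mul_dist_of_mapsTo_ball hdiff (hmaps.mono_right ball_subset_closedBall)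
      (show z ∈ ball x₀ h by rw [mem_ball, Complex.dist_eq]; exact lt_of_le_of_lt hzr hrh)
    rw [hH0, dist_zero_right, Complex.dist_eq] at this
    calc ‖H z‖ ≤ (C + ‖a‖ + ε) / h * ‖z - x₀‖ := this
      _ ≤ (C + ‖a‖ + ε) / h * r := by
          apply mul_le_mul_of_nonneg_left hzr (by positivity)
  have step4 : ‖H z‖ ≤ (C + ‖a‖) / h * r := by
    refine le_of_forall_pos_le_add fun ε hε => ?_
    have := step3 (ε * h / r) (by positivity)
    calc ‖H z‖ ≤ (C + ‖a‖ + ε * h / r) / h * r := this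
      _ = (C + ‖a‖) / h * r + ε := by field_simp
  -- final inequality
  have hlt : ‖H z‖ < ‖a‖ := by
    refine lt_of_le_of_lt step4 ?_
    rw [div_mul_eq_mul_div, div_lt_iff₀ hh]
    rw [lt_div_iff₀ (show (0:ℝ) < M + ‖a‖ * h ^ n by linarith)] at hr'
    have hCval : C * h ^ n = M := by rw [hC]; field_simp
    nlinarith [pow_pos hh n, hr.le]
  have hne : a + H z ≠ 0 := by
    intro hcon
    have hHz : H z = -a := by linear_combination hcon
    rw [hHz, norm_neg] at hlt
    exact lt_irrefl _ hlt
  rw [hfac z hzball]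
  exact mul_ne_zero (pow_ne_zero n (sub_ne_zero.mpr hz)) hne
end

section
/- Let g : ℂ → ℂ be analytic on the closed disk of radius h > 0 about x₀ with sup norm bound ‖g‖ ≤ M on that disk and g(x₀) ≠ 0. If 0 < r < h·|g(x₀)|/(M + |g(x₀)|), then g(z) ≠ 0 for all z with |z − x₀| ≤ r. -/
open Metric

/-- If `g` is analytic on the closed disk of radius `h` about `x₀`, bounded by `M`,
with `g(x₀) ≠ 0`, then `g` has no zero on the disk of radius `r` whenever
`0 < r < h·|g(x₀)|/(M + |g(x₀)|)`. -/
theorem stmt12 (x₀ : ℂ) (h M r : ℝ) (hh : 0 < h) (g : ℂ → ℂ)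
    (hg : AnalyticOnNhd ℂ g (Metric.closedBall x₀ h))
    (hbound : ∀ z ∈ Metric.closedBall x₀ h, ‖g z‖ ≤ M)
    (hg0 : g x₀ ≠ 0)
    (hr : 0 < r)
    (hr' : r < h * ‖g x₀‖ / (M + ‖g x₀‖)) :
    ∀ z : ℂ, ‖z - x₀‖ ≤ r → g z ≠ 0 := by
  intro z hz
  set a := ‖g x₀‖ with ha
  have ha0 : 0 < a := by simpa [ha] using norm_pos_iff.2 hg0
  have hMa : a ≤ M := hbound x₀ (by simp [hh.le])
  have hM0 : 0 < M := lt_of_lt_of_le ha0 hMa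
  have hden : 0 < M + a := by linarith
  have key : r * (M + a) < h * a := by
    have := (lt_div_iff₀ hden).mp hr'
    linarith
  have hrh : r < h := by
    nlinarith
  -- choose ε
  set ε : ℝ := (h * a - r * (M + a)) / (2 * r) with hε
  have hε0 : 0 < ε := by
    apply div_pos; linarith; linarith
  have hεkey : r * (M + a + ε) < h * a := by
    have : r * ε = (h * a - r * (M + a)) / 2 := by
      rw [hε]; field_simp
    nlinarith
  have hd : DifferentiableOn ℂ g (ball x₀ h) :=
    (hg.mono ball_subset_closedBall).differentiableOn
  have hmaps : Set.MapsTo g (ball x₀ h) (ball (g x₀) (M + a + ε)) := by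
    intro w hw
    have hwb : w ∈ closedBall x₀ h := ball_subset_closedBall hw
    have h1 : ‖g w‖ ≤ M := hbound w hwb
    have : dist (g w) (g x₀) < M + a + ε := by
      calc dist (g w) (g x₀) ≤ ‖g w‖ + a := by
            simpa [Complex.dist_eq, ha] using (norm_sub_le (g w) (g x₀))
        _ ≤ M + a := by linarith
        _ < M + a + ε := by linarith
    simpa [mem_ball] using this
  have hzball : z ∈ ball x₀ h := by
    have : dist z x₀ ≤ r := by simpa [Complex.dist_eq] using hz
    exact mem_ball.2 (lt_of_le_of_lt this hrh)
  have hsch := Complex.dist_le_div_mul_dist_of_mapsTo_ball hd (hmaps.mono_right ball_subset_closedBall) hzball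
  have hdz : dist z x₀ ≤ r := by simpa [Complex.dist_eq] using hz
  have hlt : dist (g z) (g x₀) < a := by
    calc dist (g z) (g x₀) ≤ (M + a + ε) / h * dist z x₀ := hsch
      _ ≤ (M + a + ε) / h * r := by
          apply mul_le_mul_of_nonneg_left hdz
          positivity
      _ < a := by
          rw [div_mul_eq_mul_div, div_lt_iff₀ hh]
          nlinarith
  intro hgz
  rw [hgz] at hlt
  simp [Complex.dist_eq, ha] at hlt
end

section
/- Let g : ℝ → ℂ be continuous and one-periodic with m := inf_x |g(x)| > 2, and let σ := min{1, (m−1)/(m(m−2))}. For any x and any unit vector v in the cone C = {(v₁,v₂) ∈ ℂ² : |v₂| ≤ σ|v₁|}, the matrix D(x) = [[1, g(x)⁻¹],[g(x)⁻¹, 0]] satisfies the norm bounds ((1 − σ/m)² + 1/m²)/(1 + σ²) ≤ ‖D(x)v‖²/‖v‖² ≤ (1 + σ/m)² + 1/m². -/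
set_option maxHeartbeats 1000000 in
lemma stmt19_aux (σ M a b t A : ℝ) (hσ0 : 0 < σ) (hσ1 : σ ≤ 1)
    (hM0 : 0 < M) (hM2 : 2 * M ≤ 1) (hkey : M * (1 + σ ^ 2) ≤ σ)
    (ha0 : 0 ≤ a) (hb0 : 0 ≤ b) (hab : b ≤ σ * a) (hnorm : a ^ 2 + b ^ 2 = 1)
    (ht0 : 0 < t) (htM : t ≤ M)
    (hA0 : 0 ≤ A) (hAu : A ≤ a + t * b) (hAl : a - t * b ≤ A) :
    (1 - σ * M) ^ 2 + M ^ 2 ≤ (A ^ 2 + (t * a) ^ 2) * (1 + σ ^ 2) ∧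
      A ^ 2 + (t * a) ^ 2 ≤ (1 + σ * M) ^ 2 + M ^ 2 := by
  have ha1 : a ≤ 1 := by nlinarith [sq_nonneg b]
  have hb2 : b ^ 2 ≤ σ ^ 2 * a ^ 2 := by nlinarith [mul_le_mul hab hab hb0 (by positivity)]
  have ha2 : 1 ≤ a ^ 2 * (1 + σ ^ 2) := by nlinarith
  have hMσa : M ≤ σ * a ^ 2 := by
    nlinarith [mul_le_mul_of_nonneg_right hkey (sq_nonneg a),
      mul_le_mul_of_nonneg_left ha2 hM0.le]
  have htb : t * b ≤ a := by nlinarith [mul_le_mul htM hab hb0 hM0.le]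
  constructor
  · -- lower bound
    have step1 : (a - t * b) ^ 2 ≤ A ^ 2 := by nlinarith
    have step2 : a ^ 2 - 2 * σ * a ^ 2 * t + t ^ 2 ≤ (a - t * b) ^ 2 + (t * a) ^ 2 := by
      nlinarith [mul_le_mul_of_nonneg_left hab (by positivity : (0:ℝ) ≤ 2 * t * a)]
    have f1 : 0 ≤ M - t := by linarith
    have f2 : 0 ≤ 2 * σ * a ^ 2 - t - M := by linarith
    have step3 : a ^ 2 - 2 * σ * a ^ 2 * M + M ^ 2 ≤ a ^ 2 - 2 * σ * a ^ 2 * t + t ^ 2 := by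
      nlinarith [mul_nonneg f1 f2]
    have f3 : 0 ≤ 1 - 2 * σ * M := by nlinarith
    have step4 : (1 - σ * M) ^ 2 + M ^ 2 ≤
        (a ^ 2 - 2 * σ * a ^ 2 * M + M ^ 2) * (1 + σ ^ 2) := by
      nlinarith [mul_le_mul_of_nonneg_left ha2 f3]
    nlinarith [step1, step2, step3, step4]
  · -- upper bound
    have h1 : A ≤ 1 + σ * M := by
      nlinarith [mul_le_mul htM hab hb0 hM0.le,
        mul_nonneg (mul_nonneg hM0.le hσ0.le) (sub_nonneg.2 ha1)]
    have h2 : t * a ≤ M := by nlinarith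
    nlinarith [mul_le_mul h1 h1 hA0 (by positivity), mul_le_mul h2 h2
      (mul_nonneg ht0.le ha0) hM0.le]

/-- Norm bounds on the cone: for `m := inf |g| > 2`, `σ := min {1, (m−1)/(m(m−2))}`,
any unit vector `(v₁, v₂)` with `|v₂| ≤ σ|v₁|`, and `w = D(x)v` with
`D(x) = [[1, g(x)⁻¹],[g(x)⁻¹, 0]]`:
`((1 − σ/m)² + 1/m²)/(1 + σ²) ≤ ‖D(x)v‖² ≤ (1 + σ/m)² + 1/m²`. -/
theorem stmt19 (g : ℝ → ℂ) (hcont : Continuous g) (hper : Function.Periodic g 1)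
    (m σ : ℝ) (hmdef : m = ⨅ x : ℝ, ‖g x‖) (hm : 2 < m)
    (hσ : σ = min 1 ((m - 1) / (m * (m - 2)))) :
    ∀ x : ℝ, ∀ v₁ v₂ : ℂ, ‖v₂‖ ≤ σ * ‖v₁‖ →
      ‖v₁‖ ^ 2 + ‖v₂‖ ^ 2 = 1 →
      ((1 - σ / m) ^ 2 + 1 / m ^ 2) / (1 + σ ^ 2) ≤
          ‖v₁ + (g x)⁻¹ * v₂‖ ^ 2 + ‖(g x)⁻¹ * v₁‖ ^ 2 ∧
        ‖v₁ + (g x)⁻¹ * v₂‖ ^ 2 + ‖(g x)⁻¹ * v₁‖ ^ 2 ≤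
          (1 + σ / m) ^ 2 + 1 / m ^ 2 := by
  have hm0 : (0:ℝ) < m := by linarith
  have hm2 : (0:ℝ) < m - 2 := by linarith
  have hσ0 : 0 < σ := by
    rw [hσ]; exact lt_min one_pos (div_pos (by linarith) (mul_pos hm0 hm2))
  have hσ1 : σ ≤ 1 := by rw [hσ]; exact min_le_left _ _
  have hkey : 1 + σ ^ 2 ≤ σ * m := by
    rcases le_total (1:ℝ) ((m - 1) / (m * (m - 2))) with h | h
    · rw [hσ, min_eq_left h]; nlinarith
    · rw [hσ, min_eq_right h]
      rw [div_le_one (by positivity)] at h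
      have hd : (0:ℝ) < m * (m - 2) := by positivity
      rw [← sub_nonneg]
      have e : (m - 1) / (m * (m - 2)) * m - (1 + ((m - 1) / (m * (m - 2))) ^ 2) =
          ((m - 1) * m * (m * (m - 2)) - ((m * (m - 2)) ^ 2 + (m - 1) ^ 2)) /
            (m * (m - 2)) ^ 2 := by
        field_simp
      rw [e]
      apply div_nonneg _ (by positivity)
      nlinarith [mul_nonneg hm0.le (by nlinarith : (0:ℝ) ≤ m ^ 2 - 3 * m + 1)]
  intro x v₁ v₂ hv hnorm
  have hr : m ≤ ‖g x‖ := by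
    rw [hmdef]
    exact ciInf_le ⟨0, by rintro y ⟨z, rfl⟩; exact norm_nonneg _⟩ x
  have hr0 : (0:ℝ) < ‖g x‖ := by linarith
  have ht0 : (0:ℝ) < (‖g x‖)⁻¹ := by positivity
  have htM : (‖g x‖)⁻¹ ≤ m⁻¹ := inv_anti₀ hm0 hr
  have hw2 : ‖(g x)⁻¹ * v₁‖ = (‖g x‖)⁻¹ * ‖v₁‖ := by
    rw [norm_mul, norm_inv]
  have hub : ‖v₁ + (g x)⁻¹ * v₂‖ ≤
      ‖v₁‖ + (‖g x‖)⁻¹ * ‖v₂‖ := by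
    refine (norm_add_le _ _).trans ?_
    rw [norm_mul, norm_inv]
  have hlb : ‖v₁‖ - (‖g x‖)⁻¹ * ‖v₂‖ ≤
      ‖v₁ + (g x)⁻¹ * v₂‖ := by
    have h := norm_add_le (v₁ + (g x)⁻¹ * v₂) (-((g x)⁻¹ * v₂))
    rw [add_neg_cancel_right, norm_neg, norm_mul, norm_inv] at h
    linarith
  have hM2 : 2 * m⁻¹ ≤ 1 := by
    have h2 : m⁻¹ ≤ 2⁻¹ := inv_anti₀ (by norm_num) hm.le
    linarith
  have hkey' : m⁻¹ * (1 + σ ^ 2) ≤ σ := by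
    have h3 := mul_le_mul_of_nonneg_left hkey (by positivity : (0:ℝ) ≤ m⁻¹)
    rw [show m⁻¹ * (σ * m) = σ * (m * m⁻¹) by ring, mul_inv_cancel₀ hm0.ne', mul_one] at h3
    linarith
  obtain ⟨hl, hu⟩ := stmt19_aux σ m⁻¹ (‖v₁‖) (‖v₂‖)
    (‖g x‖)⁻¹ (‖v₁ + (g x)⁻¹ * v₂‖) hσ0 hσ1
    (by positivity) hM2 hkey'
    (norm_nonneg _) (norm_nonneg _) hv hnorm ht0 htM
    (norm_nonneg _) hub hlb
  constructor
  · rw [hw2, div_le_iff₀ (by positivity : (0:ℝ) < 1 + σ ^ 2)]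
    calc (1 - σ / m) ^ 2 + 1 / m ^ 2 = (1 - σ * m⁻¹) ^ 2 + (m⁻¹) ^ 2 := by ring
      _ ≤ _ := hl
  · rw [hw2]
    calc _ ≤ (1 + σ * m⁻¹) ^ 2 + (m⁻¹) ^ 2 := hu
      _ = (1 + σ / m) ^ 2 + 1 / m ^ 2 := by ring
end
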